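/- Let (Ω, 𝓕, P) be a probability space with a filtration (𝓕_t)_{t∈ℕ}, and let θ* ∈ ℝ^n. Let 0 < μ ≤ L, 0 < λ_min ≤ λ_max, σ ≥ 0, and 0 < η < 2 λ_min μ / (L² λ_max²). Let (θ_t)_{t∈ℕ} be a sequence of ℝ^n-valued random vectors adapted to (𝓕_t) with θ_0 almost surely constant and each ‖θ_t − θ*‖² integrable, and let (D_t)_{t∈ℕ} be ℝ^n-valued random vectors with each ‖D_t‖² integrable such that θ_{t+1} = θ_t − η D_t almost surely. Assume for every t, almost surely: (i) ⟨θ_t − θ*, E[D_t | 𝓕_t]⟩ ≥ λ_min μ ‖θ_t − θ*‖², and (ii) E[‖D_t‖² | 𝓕_t] ≤ λ_max² (L² ‖θ_t − θ*‖² + σ²). Then for every t ∈ ℕ, E[‖θ_t − θ*‖²] ≤ (1 − 2η λ_min μ + η² L² λ_max²)^t · ‖θ_0 − θ*‖² + η σ² λ_max² / (2 λ_min μ − η L² λ_max²). -/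

import Mathlib

open MeasureTheory
open scoped RealInnerProductSpace

section aux
variable {α : Type*} {m m0 : MeasurableSpace α} {μ : Measure α}

lemma condexp_clm_comm {E F : Type*} [NormedAddCommGroup E] [NormedSpace ℝ E] [CompleteSpace E]
    [NormedAddCommGroup F] [NormedSpace ℝ F] [CompleteSpace F]
    (hm : m ≤ m0) [SigmaFinite (μ.trim hm)] (T : E →L[ℝ] F)
    {f : α → E} (hf : Integrable f μ) :
    (fun ω => T ((μ[f|m]) ω)) =ᵐ[μ] μ[fun ω => T (f ω)|m] := by
  refine ae_eq_condExp_of_forall_setIntegral_eq hm (T.integrable_comp hf)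
    (fun s _ _ => (T.integrable_comp integrable_condExp).integrableOn)
    (fun s hs hμs => ?_)
    (StronglyMeasurable.aestronglyMeasurable
      (T.continuous.comp_stronglyMeasurable stronglyMeasurable_condExp))
  rw [T.integral_comp_comm integrable_condExp.integrableOn,
    setIntegral_condExp hm hf hs, ← T.integral_comp_comm hf.integrableOn]

lemma abs_coord_le_norm {n : ℕ} (x : EuclideanSpace ℝ (Fin n)) (i : Fin n) : |x i| ≤ ‖x‖ := by
  rw [EuclideanSpace.norm_eq]
  have h1 : |x i| = Real.sqrt (‖x i‖ ^ 2) := by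
    rw [Real.sqrt_sq_eq_abs]; simp
  rw [h1]
  exact Real.sqrt_le_sqrt (Finset.single_le_sum (fun j _ => sq_nonneg ‖x j‖)
    (Finset.mem_univ i))

lemma coord_mul_integrable {n : ℕ} {X D : α → EuclideanSpace ℝ (Fin n)}
    (hX : AEStronglyMeasurable X μ) (hD : AEStronglyMeasurable D μ)
    (hXsq : Integrable (fun ω => ‖X ω‖ ^ 2) μ) (hDsq : Integrable (fun ω => ‖D ω‖ ^ 2) μ)
    (i : Fin n) : Integrable (fun ω => X ω i * D ω i) μ := by
  refine Integrable.mono' ((hXsq.add hDsq).div_const 2)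
    (((EuclideanSpace.proj i).continuous.comp_aestronglyMeasurable hX).mul
      ((EuclideanSpace.proj i).continuous.comp_aestronglyMeasurable hD))
    (Filter.Eventually.of_forall fun ω => ?_)
  have h1 := abs_coord_le_norm (X ω) i
  have h2 := abs_coord_le_norm (D ω) i
  have h3 : ‖X ω i * D ω i‖ = |X ω i| * |D ω i| := by rw [Real.norm_eq_abs, abs_mul]
  rw [h3]
  simp only [Pi.add_apply]
  have h4 : |X ω i| * |D ω i| ≤ ‖X ω‖ * ‖D ω‖ :=
    mul_le_mul h1 h2 (abs_nonneg _) (norm_nonneg _)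
  nlinarith [sq_nonneg (‖X ω‖ - ‖D ω‖)]

lemma inner_integrable {n : ℕ} {X D : α → EuclideanSpace ℝ (Fin n)}
    (hX : AEStronglyMeasurable X μ) (hD : AEStronglyMeasurable D μ)
    (hXsq : Integrable (fun ω => ‖X ω‖ ^ 2) μ) (hDsq : Integrable (fun ω => ‖D ω‖ ^ 2) μ) :
    Integrable (fun ω => ⟪X ω, D ω⟫) μ := by
  have : (fun ω => ⟪X ω, D ω⟫) = fun ω => ∑ i, X ω i * D ω i := by
    funext ω
    simp [PiLp.inner_apply, RCLike.inner_apply, conj_trivial, mul_comm]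
  rw [this]
  exact integrable_finset_sum _ fun i _ => coord_mul_integrable hX hD hXsq hDsq i

lemma condexp_inner_pullout (hm : m ≤ m0) [SigmaFinite (μ.trim hm)] {n : ℕ}
    {X D : α → EuclideanSpace ℝ (Fin n)}
    (hX : StronglyMeasurable[m] X)
    (hXsq : Integrable (fun ω => ‖X ω‖ ^ 2) μ)
    (hD : Integrable D μ) (hDsq : Integrable (fun ω => ‖D ω‖ ^ 2) μ) :
    μ[fun ω => ⟪X ω, D ω⟫|m] =ᵐ[μ] fun ω => ⟪X ω, (μ[D|m]) ω⟫ := by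
  have hXm : AEStronglyMeasurable X μ := (hX.mono hm).aestronglyMeasurable
  have hsum : (fun ω => ⟪X ω, D ω⟫) = ∑ i : Fin n, fun ω => X ω i * D ω i := by
    funext ω
    simp [PiLp.inner_apply, RCLike.inner_apply, conj_trivial, mul_comm]
  rw [hsum]
  refine (condExp_finsetSum fun i _ =>
    coord_mul_integrable hXm hD.aestronglyMeasurable hXsq hDsq i) m |>.trans ?_
  have hterm : ∀ i : Fin n,
      μ[fun ω => X ω i * D ω i|m] =ᵐ[μ] fun ω => X ω i * (μ[D|m]) ω i := by
    intro i
    have hXi : StronglyMeasurable[m] (fun ω => X ω i) :=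
      (EuclideanSpace.proj i).continuous.comp_stronglyMeasurable hX
    have hDi : Integrable (fun ω => D ω i) μ := by
      simpa using (EuclideanSpace.proj (𝕜 := ℝ) i).integrable_comp hD
    have hmul : Integrable ((fun ω => X ω i) * fun ω => D ω i) μ :=
      coord_mul_integrable hXm hD.aestronglyMeasurable hXsq hDsq i
    have h1 : μ[(fun ω => X ω i) * (fun ω => D ω i)|m] =ᵐ[μ]
        (fun ω => X ω i) * μ[fun ω => D ω i|m] :=
      condExp_mul_of_stronglyMeasurable_left hXi hmul hDi
    have h2 : (fun ω => (μ[D|m]) ω i) =ᵐ[μ] μ[fun ω => D ω i|m] :=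
      condexp_clm_comm hm (EuclideanSpace.proj i) hD
    filter_upwards [h1, h2] with ω hω1 hω2
    exact hω1.trans (by rw [Pi.mul_apply, ← hω2])
  have := eventuallyEq_sum fun i (_ : i ∈ Finset.univ) => hterm i
  refine this.trans ?_
  filter_upwards with ω
  simp [PiLp.inner_apply, RCLike.inner_apply, conj_trivial, Finset.sum_apply, mul_comm]

end aux

/-- Convergence of FIM-SGD (Theorem 2 of the paper). For adapted iterates
`θ_{t+1} = θ_t − η D_t` (with `D_t` the preconditioned stochastic gradient),
where almost surely `⟨θ_t − θ*, E[D_t | 𝓕_t]⟩ ≥ λmin μ ‖θ_t − θ*‖²` and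
`E[‖D_t‖² | 𝓕_t] ≤ λmax² (L² ‖θ_t − θ*‖² + σ²)`, and the learning rate
satisfies `0 < η < 2 λmin μ / (L² λmax²)`, the expected squared distance to
the optimum satisfies
`E[‖θ_t − θ*‖²] ≤ (1 − 2η λmin μ + η² L² λmax²)^t ‖θ_0 − θ*‖²
  + η σ² λmax² / (2 λmin μ − η L² λmax²)`. -/
theorem fim_sgd_convergence
    {Ω : Type*} {m0 : MeasurableSpace Ω} (P : Measure Ω) [IsProbabilityMeasure P]
    (𝓕 : Filtration ℕ m0)
    (n : ℕ)
    (θ D : ℕ → Ω → EuclideanSpace ℝ (Fin n))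
    (θStar θinit : EuclideanSpace ℝ (Fin n))
    (μ L lmin lmax σ η : ℝ)
    (hμ : 0 < μ) (hμL : μ ≤ L)
    (hlmin : 0 < lmin) (hlminmax : lmin ≤ lmax)
    (hσ : 0 ≤ σ)
    (hη0 : 0 < η) (hη : η < 2 * lmin * μ / (L ^ 2 * lmax ^ 2))
    (hadapted : Adapted 𝓕 θ)
    (hθ0 : ∀ᵐ ω ∂P, θ 0 ω = θinit)
    (hθ_sq_int : ∀ t, Integrable (fun ω => ‖θ t ω - θStar‖ ^ 2) P)
    (hD_int : ∀ t, Integrable (D t) P)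
    (hD_sq_int : ∀ t, Integrable (fun ω => ‖D t ω‖ ^ 2) P)
    (hupdate : ∀ t, ∀ᵐ ω ∂P, θ (t + 1) ω = θ t ω - η • D t ω)
    (hdrift : ∀ t, ∀ᵐ ω ∂P,
      lmin * μ * ‖θ t ω - θStar‖ ^ 2 ≤ ⟪θ t ω - θStar, (P[D t | 𝓕 t]) ω⟫)
    (hsecond : ∀ t, ∀ᵐ ω ∂P,
      (P[fun ω' => ‖D t ω'‖ ^ 2 | 𝓕 t]) ω ≤
        lmax ^ 2 * (L ^ 2 * ‖θ t ω - θStar‖ ^ 2 + σ ^ 2)) :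
    ∀ t, ∫ ω, ‖θ t ω - θStar‖ ^ 2 ∂P ≤
      (1 - 2 * η * lmin * μ + η ^ 2 * L ^ 2 * lmax ^ 2) ^ t *
        ‖θinit - θStar‖ ^ 2 +
        η * σ ^ 2 * lmax ^ 2 / (2 * lmin * μ - η * L ^ 2 * lmax ^ 2) := by
  have hL : 0 < L := hμ.trans_le hμL
  have hlmax : 0 < lmax := hlmin.trans_le hlminmax
  set ρ : ℝ := 1 - 2 * η * lmin * μ + η ^ 2 * L ^ 2 * lmax ^ 2 with hρdef
  set K : ℝ := η * σ ^ 2 * lmax ^ 2 / (2 * lmin * μ - η * L ^ 2 * lmax ^ 2) with hKdef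
  have hden : 0 < 2 * lmin * μ - η * L ^ 2 * lmax ^ 2 := by
    have hb : 0 < L ^ 2 * lmax ^ 2 := by positivity
    have := (lt_div_iff₀ hb).mp hη
    nlinarith
  have hK0 : 0 ≤ K := by
    apply div_nonneg _ hden.le
    positivity
  have hlmL : lmin * μ ≤ L * lmax := by nlinarith
  have hρ0 : 0 ≤ ρ := by nlinarith [sq_nonneg (1 - η * L * lmax)]
  -- the one-step recursion
  have hstep : ∀ t, ∫ ω, ‖θ (t + 1) ω - θStar‖ ^ 2 ∂P ≤
      ρ * ∫ ω, ‖θ t ω - θStar‖ ^ 2 ∂P + η ^ 2 * lmax ^ 2 * σ ^ 2 := by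
    intro t
    set X : Ω → EuclideanSpace ℝ (Fin n) := fun ω => θ t ω - θStar with hXdef
    have hXm : StronglyMeasurable[𝓕 t] X := (hadapted t).stronglyMeasurable.sub stronglyMeasurable_const
    have hXsq : Integrable (fun ω => ‖X ω‖ ^ 2) P := hθ_sq_int t
    have hXaesm : AEStronglyMeasurable X P := (hXm.mono (𝓕.le t)).aestronglyMeasurable
    have hDint := hD_int t
    have hDsq := hD_sq_int t
    have hinner_int : Integrable (fun ω => ⟪X ω, D t ω⟫) P :=
      inner_integrable hXaesm hDint.aestronglyMeasurable hXsq hDsq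
    -- pointwise expansion
    have hexp : ∀ᵐ ω ∂P, ‖θ (t + 1) ω - θStar‖ ^ 2 =
        ‖X ω‖ ^ 2 - 2 * η * ⟪X ω, D t ω⟫ + η ^ 2 * ‖D t ω‖ ^ 2 := by
      filter_upwards [hupdate t] with ω hω
      have h1 : θ (t + 1) ω - θStar = X ω - η • D t ω := by
        rw [hω, hXdef]; exact sub_right_comm _ _ _
      rw [h1, norm_sub_sq_real, real_inner_smul_right, norm_smul]
      simp [mul_pow, sq_abs, Real.norm_eq_abs]
      ring
    have hint_eq : ∫ ω, ‖θ (t + 1) ω - θStar‖ ^ 2 ∂P =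
        (∫ ω, ‖X ω‖ ^ 2 ∂P) - 2 * η * (∫ ω, ⟪X ω, D t ω⟫ ∂P)
          + η ^ 2 * (∫ ω, ‖D t ω‖ ^ 2 ∂P) := by
      have hfa : Integrable (fun a => 2 * η * ⟪X a, D t a⟫) P := hinner_int.const_mul _
      have hfb : Integrable (fun a => ‖X a‖ ^ 2 - 2 * η * ⟪X a, D t a⟫) P := hXsq.sub hfa
      have hfc : Integrable (fun a => η ^ 2 * ‖D t a‖ ^ 2) P := hDsq.const_mul _
      rw [integral_congr_ae hexp, integral_add hfb hfc, integral_sub hXsq hfa,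
        integral_const_mul, integral_const_mul]
    -- bound on the inner product term
    have hIP : lmin * μ * (∫ ω, ‖X ω‖ ^ 2 ∂P) ≤ ∫ ω, ⟪X ω, D t ω⟫ ∂P := by
      have hpull := condexp_inner_pullout (𝓕.le t) hXm hXsq hDint hDsq
      have hae : ∀ᵐ ω ∂P, lmin * μ * ‖X ω‖ ^ 2 ≤
          (P[fun ω' => ⟪X ω', D t ω'⟫|𝓕 t]) ω := by
        filter_upwards [hpull, hdrift t] with ω h1 h2
        rw [h1]
        exact h2
      calc lmin * μ * (∫ ω, ‖X ω‖ ^ 2 ∂P)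
          = ∫ ω, lmin * μ * ‖X ω‖ ^ 2 ∂P := (integral_const_mul _ _).symm
        _ ≤ ∫ ω, (P[fun ω' => ⟪X ω', D t ω'⟫|𝓕 t]) ω ∂P :=
            integral_mono_ae (hXsq.const_mul _) integrable_condExp hae
        _ = ∫ ω, ⟪X ω, D t ω⟫ ∂P := integral_condExp (𝓕.le t)
    -- bound on the second moment term
    have hDB : ∫ ω, ‖D t ω‖ ^ 2 ∂P ≤
        lmax ^ 2 * (L ^ 2 * (∫ ω, ‖X ω‖ ^ 2 ∂P) + σ ^ 2) := by
      have hbint : Integrable (fun ω => lmax ^ 2 * (L ^ 2 * ‖X ω‖ ^ 2 + σ ^ 2)) P :=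
        ((hXsq.const_mul (L ^ 2)).add (integrable_const _)).const_mul (lmax ^ 2)
      calc ∫ ω, ‖D t ω‖ ^ 2 ∂P
          = ∫ ω, (P[fun ω' => ‖D t ω'‖ ^ 2|𝓕 t]) ω ∂P := (integral_condExp (𝓕.le t)).symm
        _ ≤ ∫ ω, lmax ^ 2 * (L ^ 2 * ‖X ω‖ ^ 2 + σ ^ 2) ∂P :=
            integral_mono_ae integrable_condExp hbint (hsecond t)
        _ = lmax ^ 2 * (L ^ 2 * (∫ ω, ‖X ω‖ ^ 2 ∂P) + σ ^ 2) := by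
            rw [integral_const_mul, integral_add (hXsq.const_mul (L ^ 2)) (integrable_const _),
              integral_const_mul, integral_const]
            simp
    have h2η : (0 : ℝ) ≤ 2 * η := by linarith
    have hm1 := mul_le_mul_of_nonneg_left hIP h2η
    have hm2 := mul_le_mul_of_nonneg_left hDB (sq_nonneg η)
    rw [hint_eq]
    have hXeq : (∫ ω, ‖X ω‖ ^ 2 ∂P) = ∫ ω, ‖θ t ω - θStar‖ ^ 2 ∂P := rfl
    rw [hXeq] at hm1 hm2 ⊢
    rw [hρdef]
    nlinarith [hm1, hm2]
  -- base case value
  have he0 : ∫ ω, ‖θ 0 ω - θStar‖ ^ 2 ∂P = ‖θinit - θStar‖ ^ 2 := by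
    have : (fun ω => ‖θ 0 ω - θStar‖ ^ 2) =ᵐ[P] fun _ => ‖θinit - θStar‖ ^ 2 := by
      filter_upwards [hθ0] with ω hω
      rw [hω]
    rw [integral_congr_ae this]
    simp
  -- key algebraic identity for the tail
  have hKd : K * (2 * lmin * μ - η * L ^ 2 * lmax ^ 2) = η * σ ^ 2 * lmax ^ 2 :=
    div_mul_cancel₀ _ hden.ne'
  intro t
  induction t with
  | zero =>
    rw [he0]
    simp only [pow_zero, one_mul]
    linarith
  | succ t ih =>
    have h1 := hstep t
    have h2 := mul_le_mul_of_nonneg_left ih hρ0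
    have h3 : ρ * K + η ^ 2 * lmax ^ 2 * σ ^ 2 = K := by
      have : ρ * K = K - η * (K * (2 * lmin * μ - η * L ^ 2 * lmax ^ 2)) := by
        rw [hρdef]; ring
      rw [this, hKd]; ring
    calc ∫ ω, ‖θ (t + 1) ω - θStar‖ ^ 2 ∂P
        ≤ ρ * ∫ ω, ‖θ t ω - θStar‖ ^ 2 ∂P + η ^ 2 * lmax ^ 2 * σ ^ 2 := h1
      _ ≤ ρ * (ρ ^ t * ‖θinit - θStar‖ ^ 2 + K) + η ^ 2 * lmax ^ 2 * σ ^ 2 := by linarith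
      _ = ρ ^ (t + 1) * ‖θinit - θStar‖ ^ 2 + (ρ * K + η ^ 2 * lmax ^ 2 * σ ^ 2) := by ring
      _ = ρ ^ (t + 1) * ‖θinit - θStar‖ ^ 2 + K := by rw [h3]
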